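/- (Mixed-integer obstacle avoidance, Corollary 1.) Let h_1,…,h_M ∈ ℝ^q and k_1,…,k_M ∈ ℝ define M hyperplanes, let σ : {1,…,M} → {−1, +1} be a sign tuple, and let the obstacle be the polyhedral cell A(σ) = {x ∈ ℝ^q : σ(m)·⟨h_m, x⟩ ≤ σ(m)·k_m for all m = 1,…,M}. Let T ∈ ℝ and suppose for every index i with d − 1 ≤ i ≤ n there are binary variables α_{i,1},…,α_{i,M} ∈ {0,1} such that: (a) Σ_{m=1}^{M} α_{i,m} ≤ M − 1, and (b) −σ(m)·⟨h_m, p_j⟩ < −σ(m)·k_m + T·α_{i,m} for all m = 1,…,M and all j with i − d + 1 ≤ j ≤ i. Then the B-spline curve avoids the obstacle: z(t) ∉ A(σ) for every t with τ_{d−1} ≤ t < τ_{n+1}. -/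

import Mathlib

/-- Cox–de Boor B-spline basis function `B_{i,d}(t)` of order `d` for the knot
vector `τ`.  In Lean, division by zero yields zero, which matches the standard
convention that any term of the recursion whose denominator vanishes is taken
to be zero. -/
noncomputable def bspline (τ : ℕ → ℝ) : ℕ → ℕ → ℝ → ℝ
  | 0, _, _ => 0
  | 1, i, t => if τ i ≤ t ∧ t < τ (i + 1) then 1 else 0
  | d + 2, i, t =>
      (t - τ i) / (τ (i + d + 1) - τ i) * bspline τ (d + 1) i t
      + (τ (i + d + 2) - t) / (τ (i + d + 2) - τ (i + 1)) * bspline τ (d + 1) (i + 1) t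
lemma bspline_congr (τ₁ τ₂ : ℕ → ℝ) :
    ∀ (d i : ℕ) (t : ℝ), (∀ r, r ≤ d → τ₁ (i + r) = τ₂ (i + r)) →
      bspline τ₁ d i t = bspline τ₂ d i t
  | 0, i, t, _ => by simp [bspline]
  | 1, i, t, h => by
      have h0 := h 0 (by omega)
      have h1 := h 1 (by omega)
      simp only [Nat.add_zero] at h0
      simp [bspline, h0, h1]
  | (d+2), i, t, h => by
      have e1 : bspline τ₁ (d+1) i t = bspline τ₂ (d+1) i t :=
        bspline_congr τ₁ τ₂ (d+1) i t (fun r hr => h r (by omega))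
      have e2 : bspline τ₁ (d+1) (i+1) t = bspline τ₂ (d+1) (i+1) t :=
        bspline_congr τ₁ τ₂ (d+1) (i+1) t (fun r hr => by
          have := h (r+1) (by omega)
          simpa [show i + 1 + r = i + (r+1) by omega] using this)
      have h0 := h 0 (by omega)
      have h1 := h 1 (by omega)
      have hA := h (d+1) (by omega)
      have hB := h (d+2) (by omega)
      simp only [Nat.add_zero] at h0
      simp only [← Nat.add_assoc] at hA hB
      simp [bspline, e1, e2, h0, h1, hA, hB]

lemma bspline_eq_zero (τ : ℕ → ℝ) (hτ : Monotone τ) :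
    ∀ (d i : ℕ) (t : ℝ), (t < τ i ∨ τ (i + d) ≤ t) → bspline τ d i t = 0
  | 0, i, t, _ => by simp [bspline]
  | 1, i, t, h => by
      simp only [bspline, ite_eq_right_iff, one_ne_zero, imp_false]
      rintro ⟨a, b⟩
      rcases h with h | h
      · linarith
      · linarith
  | (d+2), i, t, h => by
      have z1 : bspline τ (d+1) i t = 0 := by
        refine bspline_eq_zero τ hτ (d+1) i t ?_
        rcases h with h | h
        · exact Or.inl h
        · exact Or.inr (le_trans (hτ (show i + (d+1) ≤ i + (d+2) by omega)) h)
      have z2 : bspline τ (d+1) (i+1) t = 0 := by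
        refine bspline_eq_zero τ hτ (d+1) (i+1) t ?_
        rcases h with h | h
        · exact Or.inl (lt_of_lt_of_le h (hτ (show i ≤ i + 1 by omega)))
        · exact Or.inr (le_trans (le_of_eq (by ring_nf)) h)
      simp [bspline, z1, z2]

lemma bspline_nonneg (τ : ℕ → ℝ) (hτ : StrictMono τ) :
    ∀ (d i : ℕ) (t : ℝ), 0 ≤ bspline τ d i t
  | 0, i, t => by simp [bspline]
  | 1, i, t => by
      simp only [bspline]
      split <;> norm_num
  | (d+2), i, t => by
      by_cases hlo : τ i ≤ t
      · by_cases hhi : t < τ (i + d + 2)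
        · have n1 := bspline_nonneg τ hτ (d+1) i t
          have n2 := bspline_nonneg τ hτ (d+1) (i+1) t
          have d1 : τ i < τ (i + d + 1) := hτ (show i < i + d + 1 by omega)
          have d2 : τ (i+1) < τ (i + d + 2) := hτ (show i + 1 < i + d + 2 by omega)
          have a1 : 0 ≤ (t - τ i) / (τ (i + d + 1) - τ i) :=
            div_nonneg (by linarith) (by linarith)
          have a2 : 0 ≤ (τ (i + d + 2) - t) / (τ (i + d + 2) - τ (i + 1)) :=
            div_nonneg (by linarith) (by linarith)
          show (0:ℝ) ≤ (t - τ i) / (τ (i + d + 1) - τ i) * bspline τ (d + 1) i t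
            + (τ (i + d + 2) - t) / (τ (i + d + 2) - τ (i + 1)) * bspline τ (d + 1) (i + 1) t
          exact add_nonneg (mul_nonneg a1 n1) (mul_nonneg a2 n2)
        · have := bspline_eq_zero τ hτ.monotone (d+2) i t (Or.inr (by
            push_neg at hhi
            exact le_trans (le_of_eq (by ring_nf)) hhi))
          rw [this]
      · have := bspline_eq_zero τ hτ.monotone (d+2) i t (Or.inl (by linarith [not_le.mp hlo]))
        rw [this]

lemma bspline_partition (τ : ℕ → ℝ) (hτ : StrictMono τ) :
    ∀ (d c : ℕ) (t : ℝ), τ (c + d) ≤ t → t < τ (c + d + 1) →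
      ∑ s ∈ Finset.range (d + 1), bspline τ (d + 1) (c + s) t = 1
  | 0, c, t, h1, h2 => by
      rw [Finset.sum_range_one]
      simp only [Nat.add_zero] at h1 h2 ⊢
      simp only [bspline]
      rw [if_pos ⟨h1, h2⟩]
  | (d+1), c, t, h1, h2 => by
      have ih := bspline_partition τ hτ d (c+1) t
        (by simpa [show c + 1 + d = c + (d+1) by omega] using h1)
        (by simpa [show c + 1 + d + 1 = c + (d+1) + 1 by omega] using h2)
      have hsplit : ∑ s ∈ Finset.range (d+2), bspline τ (d+2) (c+s) t
          = (∑ s ∈ Finset.range (d+2),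
              (t - τ (c+s)) / (τ (c+s+d+1) - τ (c+s)) * bspline τ (d+1) (c+s) t)
          + ∑ s ∈ Finset.range (d+2),
              (τ (c+s+d+2) - t) / (τ (c+s+d+2) - τ (c+s+1)) * bspline τ (d+1) (c+s+1) t := by
        rw [← Finset.sum_add_distrib]
        exact Finset.sum_congr rfl fun s _ => rfl
      have z0 : bspline τ (d+1) (c+0) t = 0 :=
        bspline_eq_zero τ hτ.monotone (d+1) (c+0) t (Or.inr (by simpa using h1))
      have zlast : bspline τ (d+1) (c+(d+1)+1) t = 0 :=
        bspline_eq_zero τ hτ.monotone (d+1) (c+(d+1)+1) t (Or.inl h2)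
      have step : ∀ s ∈ Finset.range (d+1),
          (t - τ (c+(s+1))) / (τ (c+(s+1)+d+1) - τ (c+(s+1))) * bspline τ (d+1) (c+(s+1)) t
          + (τ (c+s+d+2) - t) / (τ (c+s+d+2) - τ (c+s+1)) * bspline τ (d+1) (c+s+1) t
          = bspline τ (d+1) (c+1+s) t := by
        intro s _
        have e1 : c+(s+1)+d+1 = c+s+d+2 := by omega
        have e2 : c+(s+1) = c+s+1 := by omega
        have e3 : c+1+s = c+s+1 := by omega
        rw [e1, e2, e3, ← add_mul, ← add_div]
        have hlt : τ (c+s+1) < τ (c+s+d+2) := hτ (by omega)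
        rw [show t - τ (c+s+1) + (τ (c+s+d+2) - t) = τ (c+s+d+2) - τ (c+s+1) by ring]
        rw [div_self (sub_ne_zero.mpr hlt.ne'), one_mul]
      rw [show (d+1)+1 = d+2 from rfl, hsplit,
        Finset.sum_range_succ' _ (d+1), Finset.sum_range_succ _ (d+1), z0, zlast,
        mul_zero, mul_zero, add_zero, add_zero, ← Finset.sum_add_distrib,
        Finset.sum_congr rfl step, ih]

open scoped RealInnerProductSpace

/-- Corollary 1: mixed-integer obstacle avoidance.  The obstacle
is the polyhedral cell of a hyperplane arrangement selected by the sign tuple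
`sgn`, and for each window of `d` consecutive control points at least one
support hyperplane (selected via the binary variables `α`) separates the
window from the cell (here `n = m - d`; hyperplanes are indexed `0, …, M-1`). -/
theorem bspline_mixed_integer_obstacle_avoidance (q m d M : ℕ) (τ : ℕ → ℝ)
    (hτ : ∀ j, j < m → τ j < τ (j + 1))
    (hd : 1 ≤ d) (hdm : d ≤ m)
    (p : ℕ → EuclideanSpace ℝ (Fin q))
    (h : ℕ → EuclideanSpace ℝ (Fin q)) (k : ℕ → ℝ)
    (sgn : ℕ → ℝ) (hsgn : ∀ l, l < M → sgn l = 1 ∨ sgn l = -1)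
    (T : ℝ)
    (hmi : ∀ i, d - 1 ≤ i → i ≤ m - d →
      ∃ α : ℕ → ℝ,
        (∀ l, l < M → α l = 0 ∨ α l = 1) ∧
        (∑ l ∈ Finset.range M, α l ≤ (M : ℝ) - 1) ∧
        (∀ l, l < M → ∀ j, i - (d - 1) ≤ j → j ≤ i →
          -sgn l * ⟪h l, p j⟫ < -sgn l * k l + T * α l))
    (t : ℝ) (ht1 : τ (d - 1) ≤ t) (ht2 : t < τ (m - d + 1)) :
    (∑ j ∈ Finset.range (m - d + 1), bspline τ d j t • p j) ∉
      {x : EuclideanSpace ℝ (Fin q) | ∀ l, l < M → sgn l * ⟪h l, x⟫ ≤ sgn l * k l} := by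
  intro hmem
  simp only [Set.mem_setOf_eq] at hmem
  obtain ⟨e, rfl⟩ : ∃ e, d = e + 1 := ⟨d - 1, by omega⟩
  simp only [Nat.add_sub_cancel] at ht1 hmi
  -- extended strictly monotone knot vector
  set τ' : ℕ → ℝ := fun j => if j ≤ m then τ j else τ m + ((j : ℝ) - m) with hτ'def
  have agree : ∀ j, j ≤ m → τ' j = τ j := fun j hj => by simp [hτ'def, hj]
  have hτ' : StrictMono τ' := by
    apply strictMono_nat_of_lt_succ
    intro j
    by_cases h1 : j + 1 ≤ m
    · rw [agree j (by omega), agree (j+1) h1]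
      exact hτ j (by omega)
    · by_cases h2 : j ≤ m
      · have hjm : j = m := by omega
        rw [hjm, agree m le_rfl]
        simp only [hτ'def, if_neg (show ¬ m + 1 ≤ m by omega)]
        push_cast
        linarith
      · simp only [hτ'def, if_neg (show ¬ j ≤ m from h2), if_neg (show ¬ j + 1 ≤ m by omega)]
        push_cast
        linarith
  have mono : ∀ a b, a ≤ b → b ≤ m → τ a ≤ τ b := fun a b hab hbm => by
    rw [← agree a (hab.trans hbm), ← agree b hbm]; exact hτ'.monotone hab
  -- the interval index exists and gives a nonvacuous window
  have hem : e ≤ m - (e+1) := by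
    by_contra hc
    have h1 : m - (e+1) + 1 ≤ e := by omega
    have h2 : e ≤ m := by omega
    have := mono _ _ h1 h2
    linarith
  obtain ⟨i, hiS, hmax⟩ := Finset.exists_max_image
    ((Finset.Icc e (m - (e+1))).filter (fun j => τ j ≤ t)) id
    ⟨e, by simp only [Finset.mem_filter, Finset.mem_Icc]; exact ⟨⟨le_rfl, hem⟩, ht1⟩⟩
  simp only [Finset.mem_filter, Finset.mem_Icc] at hiS
  obtain ⟨⟨hie, him⟩, hit⟩ := hiS
  have hti1 : t < τ (i + 1) := by
    rcases Nat.eq_or_lt_of_le him with heq | hlt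
    · rw [heq]; exact ht2
    · by_contra hcon
      push_neg at hcon
      have := hmax (i+1) (by
        simp only [Finset.mem_filter, Finset.mem_Icc]
        exact ⟨⟨by omega, by omega⟩, hcon⟩)
      simp only [id] at this
      omega
  -- switch spline terms to the extended knot vector
  have heq : ∀ j, j ≤ m - (e+1) → bspline τ (e+1) j t = bspline τ' (e+1) j t := by
    intro j hj
    exact bspline_congr τ τ' (e+1) j t (fun r hr => (agree (j + r) (by omega)).symm)
  obtain ⟨c, hce⟩ : ∃ c, c + e = i := ⟨i - e, by omega⟩
  -- localization of the sum to the active window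
  have hzloc : ∑ j ∈ Finset.range (m - (e+1) + 1), bspline τ (e+1) j t • p j
      = ∑ j ∈ Finset.Icc c i, bspline τ' (e+1) j t • p j := by
    rw [Finset.sum_congr rfl (fun j hj => by
      rw [heq j (by simpa [Nat.lt_succ_iff] using hj)])]
    refine (Finset.sum_subset ?_ ?_).symm
    · intro j hj
      simp only [Finset.mem_Icc] at hj
      simp only [Finset.mem_range]
      omega
    · intro j hj hj2
      simp only [Finset.mem_range] at hj
      simp only [Finset.mem_Icc, not_and_or, not_le] at hj2
      have hz : bspline τ' (e+1) j t = 0 := by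
        apply bspline_eq_zero τ' hτ'.monotone
        rcases hj2 with hj2 | hj2
        · refine Or.inr ?_
          have hle : j + (e+1) ≤ i := by omega
          calc τ' (j + (e+1)) ≤ τ' i := hτ'.monotone hle
            _ = τ i := agree i (by omega)
            _ ≤ t := hit
        · refine Or.inl ?_
          calc t < τ (i+1) := hti1
            _ = τ' (i+1) := (agree (i+1) (by omega)).symm
            _ ≤ τ' j := hτ'.monotone (by omega)
      rw [hz, zero_smul]
  -- partition of unity on the window
  have hpart : ∑ j ∈ Finset.Icc c i, bspline τ' (e+1) j t = 1 := by
    have := bspline_partition τ' hτ' e c t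
      (by rw [hce, agree i (by omega)]; exact hit)
      (by rw [hce, agree (i+1) (by omega)]; exact hti1)
    rw [← hce, ← Finset.Ico_add_one_right_eq_Icc, Finset.sum_Ico_eq_sum_range,
      show c + e + 1 - c = e + 1 by omega]
    exact this
  -- get the binary variables and a vanishing one
  obtain ⟨α, hα01, hαsum, hαsep⟩ := hmi i hie him
  have hM : 0 < M := by
    rcases Nat.eq_zero_or_pos M with rfl | hM
    · simp at hαsum; linarith
    · exact hM
  have hl0 : ∃ l, l < M ∧ α l = 0 := by
    by_contra hc2
    push_neg at hc2
    have hall : ∀ l ∈ Finset.range M, α l = 1 := by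
      intro l hl
      simp only [Finset.mem_range] at hl
      exact (hα01 l hl).resolve_left (hc2 l hl)
    rw [Finset.sum_congr rfl hall, Finset.sum_const, Finset.card_range,
      nsmul_eq_mul, mul_one] at hαsum
    linarith
  obtain ⟨l, hlM, hl0⟩ := hl0
  -- separation of the window control points
  have hsep : ∀ j ∈ Finset.Icc c i, sgn l * k l < sgn l * ⟪h l, p j⟫ := by
    intro j hj
    simp only [Finset.mem_Icc] at hj
    have := hαsep l hlM j (by omega) hj.2
    rw [hl0] at this
    nlinarith [this]
  -- conclude
  rw [hzloc] at hmem
  have hinner : ⟪h l, ∑ j ∈ Finset.Icc c i, bspline τ' (e+1) j t • p j⟫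
      = ∑ j ∈ Finset.Icc c i, bspline τ' (e+1) j t * ⟪h l, p j⟫ := by
    rw [inner_sum]
    exact Finset.sum_congr rfl fun j _ => real_inner_smul_right _ _ _
  have hkey : sgn l * k l < sgn l * ⟪h l, ∑ j ∈ Finset.Icc c i, bspline τ' (e+1) j t • p j⟫ := by
    rw [hinner, Finset.mul_sum]
    have hlt : ∑ j ∈ Finset.Icc c i, bspline τ' (e+1) j t * (sgn l * k l)
        < ∑ j ∈ Finset.Icc c i, sgn l * (bspline τ' (e+1) j t * ⟪h l, p j⟫) := by
      obtain ⟨j0, hj0, hj0pos⟩ : ∃ j0 ∈ Finset.Icc c i, (0:ℝ) < bspline τ' (e+1) j0 t := by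
        have := Finset.exists_lt_of_sum_lt (f := fun _ : ℕ => (0:ℝ))
          (g := fun j => bspline τ' (e+1) j t) (by rw [hpart]; simp)
        simpa using this
      refine Finset.sum_lt_sum (fun j hj => ?_) ⟨j0, hj0, ?_⟩
      · have hw := bspline_nonneg τ' hτ' (e+1) j t
        have := (hsep j hj).le
        nlinarith
      · have := hsep j0 hj0
        nlinarith
    calc sgn l * k l = ∑ j ∈ Finset.Icc c i, bspline τ' (e+1) j t * (sgn l * k l) := by
          rw [← Finset.sum_mul, hpart, one_mul]
      _ < _ := hlt
  exact absurd (hmem l hlM) (not_le.mpr hkey)
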